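/- Let n, p be integers with 0 < p < n, let W be an arbitrary real n×n matrix, and let v ∈ {0,1}ⁿ with Σ_i v_i = p. Then h(v)^T W v = (n/(p(n−p))) · v^T ( W − (p/n)·D ) v, where D is the diagonal n×n matrix whose j-th diagonal entry is the j-th column sum Σ_i W_{ij} of W. Consequently, a vector v ∈ {0,1}ⁿ with Σ_i v_i = p maximizes v ↦ h(v)^T W v over {v ∈ {0,1}ⁿ : Σ_i v_i = p} if and only if it maximizes v ↦ v^T ( W − (p/n)·D ) v over the same set. -/

import Mathlib

/-- For `v ∈ {0,1}ⁿ` with `0 < ‖v‖₁ < n`, the vector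
`h(v) = (1/‖v‖₁)·v − (1/(n−‖v‖₁))·(𝟙 − v)` (for `0/1` vectors, `‖v‖₁ = Σ_j v_j`). -/
noncomputable def hvec {n : ℕ} (v : Fin n → ℝ) : Fin n → ℝ :=
  fun i => (1 / ∑ j, v j) * v i - (1 / ((n : ℝ) - ∑ j, v j)) * (1 - v i)

/-- The quadratic objective `h(v)^T W v`. -/
noncomputable def obj₁ {n : ℕ} (W : Fin n → Fin n → ℝ) (v : Fin n → ℝ) : ℝ :=
  ∑ i, ∑ j, hvec v i * W i j * v j

/-- The quadratic objective `v^T (W − (p/n)·D) v`, where `D` is the diagonal matrix of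
column sums of `W`. -/
noncomputable def obj₂ {n : ℕ} (p : ℕ) (W : Fin n → Fin n → ℝ) (v : Fin n → ℝ) : ℝ :=
  ∑ i, ∑ j, v i * (W i j - if i = j then ((p : ℝ) / (n : ℝ)) * ∑ k, W k j else 0) * v j

lemma key_identity (n p : ℕ) (hp0 : 0 < p) (hpn : p < n) (W : Fin n → Fin n → ℝ)
    (u : Fin n → ℝ) (hu01 : ∀ i, u i = 0 ∨ u i = 1) (hup : ∑ i, u i = (p : ℝ)) :
    obj₁ W u = ((n : ℝ) / ((p : ℝ) * ((n : ℝ) - (p : ℝ)))) * obj₂ p W u := by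
  have hpR : (0:ℝ) < p := by exact_mod_cast hp0
  have hpnR : (p:ℝ) < n := by exact_mod_cast hpn
  have hnR : (0:ℝ) < n := lt_trans hpR hpnR
  have husq : ∀ j, u j * u j = u j := by
    intro j; rcases hu01 j with h | h <;> simp [h]
  set S : ℝ := ∑ i, ∑ j, u i * W i j * u j with hS
  set T : ℝ := ∑ j, (∑ k, W k j) * u j with hT
  have h1 : obj₁ W u = (1/(p:ℝ)) * S - (1/((n:ℝ)-p)) * (T - S) := by
    have hU : (∑ i, ∑ j, W i j * u j) = T := by
      rw [Finset.sum_comm]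
      simp [hT, Finset.sum_mul]
    have step : ∀ i j, hvec u i * W i j * u j
        = (1/(p:ℝ)) * (u i * W i j * u j)
          - (1/((n:ℝ)-p)) * (W i j * u j - u i * W i j * u j) := by
      intro i j
      simp only [hvec, hup]
      ring
    calc obj₁ W u = ∑ i, ∑ j, ((1/(p:ℝ)) * (u i * W i j * u j)
          - (1/((n:ℝ)-p)) * (W i j * u j - u i * W i j * u j)) := by
            unfold obj₁
            exact Finset.sum_congr rfl fun i _ => Finset.sum_congr rfl fun j _ => step i j
      _ = (1/(p:ℝ)) * S - (1/((n:ℝ)-p)) * (T - S) := by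
            simp only [Finset.sum_sub_distrib, ← Finset.mul_sum, mul_sub, ← hS, hU]
  have h2 : obj₂ p W u = S - ((p:ℝ)/n) * T := by
    have step : ∀ i, ∑ j, u i * (W i j - if i = j then ((p : ℝ) / (n : ℝ)) * ∑ k, W k j else 0) * u j
        = (∑ j, u i * W i j * u j) - ((p:ℝ)/n) * ((∑ k, W k i) * u i) := by
      intro i
      have : ∀ j, u i * (W i j - if i = j then ((p : ℝ) / (n : ℝ)) * ∑ k, W k j else 0) * u j
          = u i * W i j * u j - (if i = j then ((p:ℝ)/n) * (∑ k, W k j) * u i * u j else 0) := by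
        intro j
        by_cases h : i = j <;> simp [h] <;> ring
      rw [Finset.sum_congr rfl fun j _ => this j, Finset.sum_sub_distrib,
        Finset.sum_ite_eq Finset.univ i (fun j => ((p:ℝ)/n) * (∑ k, W k j) * u i * u j)]
      simp only [Finset.mem_univ, if_true]
      linear_combination (-((p:ℝ)/n * ∑ k, W k i)) * husq i
    unfold obj₂
    rw [Finset.sum_congr rfl fun i _ => step i, Finset.sum_sub_distrib, ← hS,
      ← Finset.mul_sum]
  rw [h1, h2, hT]
  have hp0' : (p:ℝ) ≠ 0 := ne_of_gt hpR
  have hnp' : (n:ℝ) - p ≠ 0 := by linarith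
  have hn0' : (n:ℝ) ≠ 0 := ne_of_gt hnR
  field_simp
  ring

theorem stmt11 (n p : ℕ) (hp0 : 0 < p) (hpn : p < n) (W : Fin n → Fin n → ℝ)
    (v : Fin n → ℝ) (hv01 : ∀ i, v i = 0 ∨ v i = 1) (hvp : ∑ i, v i = (p : ℝ)) :
    obj₁ W v = ((n : ℝ) / ((p : ℝ) * ((n : ℝ) - (p : ℝ)))) * obj₂ p W v
    ∧ ((∀ u : Fin n → ℝ, (∀ i, u i = 0 ∨ u i = 1) → ∑ i, u i = (p : ℝ) →
          obj₁ W u ≤ obj₁ W v)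
        ↔ (∀ u : Fin n → ℝ, (∀ i, u i = 0 ∨ u i = 1) → ∑ i, u i = (p : ℝ) →
          obj₂ p W u ≤ obj₂ p W v)) := by
  have hpR : (0:ℝ) < p := by exact_mod_cast hp0
  have hpnR : (p:ℝ) < n := by exact_mod_cast hpn
  have hc : (0:ℝ) < (n : ℝ) / ((p : ℝ) * ((n : ℝ) - (p : ℝ))) := by
    apply div_pos (by linarith)
    exact mul_pos hpR (by linarith)
  refine ⟨key_identity n p hp0 hpn W v hv01 hvp, ?_⟩
  constructor
  · intro H u hu01 hup
    have := H u hu01 hup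
    rw [key_identity n p hp0 hpn W u hu01 hup,
      key_identity n p hp0 hpn W v hv01 hvp] at this
    exact (mul_le_mul_iff_right₀ hc).mp this
  · intro H u hu01 hup
    rw [key_identity n p hp0 hpn W u hu01 hup,
      key_identity n p hp0 hpn W v hv01 hvp]
    exact (mul_le_mul_iff_right₀ hc).mpr (H u hu01 hup)
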